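/- Let d be a pseudometric on ℕ₀³ and λ ∈ (0,1) satisfying the coordinatewise λ-contraction property. If there exists x ∈ ℕ₀³ with ρ(x) = 0, then there exists a Cauchy sequence (xₙ) in (ℕ₀³, d) with x_{n+1} − xₙ ∈ {e₁, e₂, e₃} for all n. -/

import Mathlib

/-- The grid ℕ₀³. -/
abbrev Grid : Type := Fin 3 → ℕ

/-- Standard basis vector eᵢ. -/
def e (i : Fin 3) : Grid := fun j => if j = i then 1 else 0

/-- ρ(x) = max of the three distances to successors. -/
noncomputable def rho (d : Grid → Grid → ℝ) (x : Grid) : ℝ :=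
  max (d x (x + e 0)) (max (d x (x + e 1)) (d x (x + e 2)))

/-- A 1-way sequence: consecutive differences are basis vectors. -/
def OneWay (s : ℕ → Grid) : Prop := ∀ n, ∃ i, s (n + 1) = s n + e i

/-- Cauchy with respect to the pseudometric d. -/
def IsCauchySeq (d : Grid → Grid → ℝ) (s : ℕ → Grid) : Prop :=
  ∀ ε > (0 : ℝ), ∃ N, ∀ m ≥ N, ∀ n ≥ N, d (s m) (s n) < ε

/-- d is a pseudometric. -/
def Pseudo (d : Grid → Grid → ℝ) : Prop :=
  (∀ x, d x x = 0) ∧ (∀ x y, 0 ≤ d x y) ∧ (∀ x y, d x y = d y x) ∧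
    (∀ x y z, d x z ≤ d x y + d y z)

/-- The coordinatewise λ-contraction property. -/
def Contractive (d : Grid → Grid → ℝ) (lam : ℝ) : Prop :=
  ∀ a b : Grid, ∃ i : Fin 3, d (a + e i) (b + e i) ≤ lam * d a b

/-- A 2-way set: each element has exactly two of its three successors inside. -/
def TwoWaySet (S : Set Grid) : Prop :=
  ∀ s ∈ S, ∃ i : Fin 3, s + e i ∉ S ∧ ∀ j : Fin 3, j ≠ i → s + e j ∈ S

theorem stmt4 (d : Grid → Grid → ℝ) (lam : ℝ) (h0 : 0 < lam) (h1 : lam < 1)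
    (hd : Pseudo d) (hc : Contractive d lam)
    (x : Grid) (hx : rho d x = 0) :
    ∃ s : ℕ → Grid, OneWay s ∧ IsCauchySeq d s := by
  obtain ⟨hrefl, hnn, hsymm, htri⟩ := hd
  -- each edge at x has distance 0
  have hxe : ∀ i : Fin 3, d x (x + e i) = 0 := by
    intro i
    have h0' : d x (x + e 0) ≤ 0 := hx ▸ le_max_left _ _
    have h1' : d x (x + e 1) ≤ 0 := hx ▸ le_trans (le_max_left _ _) (le_max_right _ _)
    have h2' : d x (x + e 2) ≤ 0 := hx ▸ le_trans (le_max_right _ _) (le_max_right _ _)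
    fin_cases i
    · exact le_antisymm h0' (hnn _ _)
    · exact le_antisymm h1' (hnn _ _)
    · exact le_antisymm h2' (hnn _ _)
  -- key step: from a zero-distance point, some successor also has zero distance
  have key : ∀ y : Grid, d x y = 0 → ∃ i : Fin 3, d x (y + e i) = 0 := by
    intro y hy
    obtain ⟨i, hi⟩ := hc x y
    refine ⟨i, le_antisymm ?_ (hnn _ _)⟩
    calc d x (y + e i) ≤ d x (x + e i) + d (x + e i) (y + e i) := htri _ _ _
      _ ≤ 0 + lam * d x y := by
          exact add_le_add (le_of_eq (hxe i)) hi
      _ = 0 := by rw [hy]; ring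
  -- iterate
  let Z := {y : Grid // d x y = 0}
  let f : Z → Z := fun p => ⟨p.1 + e (key p.1 p.2).choose, (key p.1 p.2).choose_spec⟩
  let z0 : Z := ⟨x, hrefl x⟩
  refine ⟨fun n => (f^[n] z0).1, ?_, ?_⟩
  · intro n
    refine ⟨(key (f^[n] z0).1 (f^[n] z0).2).choose, ?_⟩
    simp only [Function.iterate_succ_apply']
    rfl
  · intro ε hε
    refine ⟨0, fun m _ n _ => ?_⟩
    have hm : d x (f^[m] z0).1 = 0 := (f^[m] z0).2
    have hn : d x (f^[n] z0).1 = 0 := (f^[n] z0).2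
    have : d (f^[m] z0).1 (f^[n] z0).1 ≤ d (f^[m] z0).1 x + d x (f^[n] z0).1 := htri _ _ _
    rw [hsymm (f^[m] z0).1 x, hm, hn] at this
    linarith
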